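/- There exists a unique r₀ ∈ (0,1) such that the derivative of φ vanishes at r₀, where φ(r) := √(r(1−r)) + (1−r)^{3/2}·log(1+√r) − (1/2)·(1−r)^{3/2}·log(1−r) for r ∈ (0,1). -/

import Mathlib

open Real Set

/-- `φ(r) = √(r(1−r)) + (1−r)^{3/2}·log(1+√r) − (1/2)(1−r)^{3/2}·log(1−r)`. -/
noncomputable def phi (r : ℝ) : ℝ :=
  Real.sqrt (r * (1 - r)) + (1 - r) ^ ((3 : ℝ) / 2) * Real.log (1 + Real.sqrt r)
    - (1 / 2) * (1 - r) ^ ((3 : ℝ) / 2) * Real.log (1 - r)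

noncomputable def psi (s : ℝ) : ℝ :=
  (2 - 3 * s ^ 2) / (2 * s * (1 - s ^ 2)) + (3 / 4) * Real.log (1 - s)
    - (3 / 4) * Real.log (1 + s)

lemma hasDerivAt_psi {s : ℝ} (hs : s ∈ Set.Ioo (0:ℝ) 1) :
    HasDerivAt psi (-(1 / (s ^ 2 * (1 - s ^ 2) ^ 2))) s := by
  obtain ⟨h0, h1⟩ := hs
  have hs2 : 1 - s ^ 2 > 0 := by nlinarith
  have hden : 2 * s * (1 - s ^ 2) ≠ 0 := by positivity
  have h1s : (1 : ℝ) - s ≠ 0 := by nlinarith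
  have h1s' : (1 : ℝ) + s ≠ 0 := by nlinarith
  have hN : HasDerivAt (fun x : ℝ => 2 - 3 * x ^ 2) (-(6 * s)) s := by
    have := ((hasDerivAt_pow 2 s).const_mul (3:ℝ)).const_sub 2
    refine this.congr_deriv ?_; ring
  have hD : HasDerivAt (fun x : ℝ => 2 * x * (1 - x ^ 2)) (2 - 6 * s ^ 2) s := by
    have := ((hasDerivAt_id s).const_mul (2:ℝ)).mul ((hasDerivAt_pow 2 s).const_sub 1)
    refine this.congr_deriv ?_
    simp only [id_eq]; push_cast; ring
  have hQ := hN.div hD hden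
  have hL1 : HasDerivAt (fun x : ℝ => (3/4 : ℝ) * Real.log (1 - x)) ((3/4) * (-(1 - s)⁻¹)) s := by
    have hi : HasDerivAt (fun x : ℝ => 1 - x) (-1 : ℝ) s := by
      simpa using (hasDerivAt_id s).const_sub 1
    have := ((Real.hasDerivAt_log h1s).comp s hi).const_mul (3/4 : ℝ)
    refine this.congr_deriv ?_; ring
  have hL2 : HasDerivAt (fun x : ℝ => (3/4 : ℝ) * Real.log (1 + x)) ((3/4) * (1 + s)⁻¹) s := by
    have hi : HasDerivAt (fun x : ℝ => 1 + x) (1 : ℝ) s := by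
      simpa using (hasDerivAt_id s).const_add 1
    have := ((Real.hasDerivAt_log h1s').comp s hi).const_mul (3/4 : ℝ)
    refine this.congr_deriv ?_; ring
  have := (hQ.add hL1).sub hL2
  refine this.congr_deriv ?_
  field_simp
  ring

lemma hasDerivAt_phi {r : ℝ} (hr : r ∈ Set.Ioo (0:ℝ) 1) :
    HasDerivAt phi (Real.sqrt (1 - r) * psi (Real.sqrt r)) r := by
  obtain ⟨h0, h1⟩ := hr
  set u := Real.sqrt r with hu
  set v := Real.sqrt (1 - r) with hv
  have h1r : (0:ℝ) < 1 - r := by linarith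
  have hu0 : 0 < u := Real.sqrt_pos.2 h0
  have hv0 : 0 < v := Real.sqrt_pos.2 h1r
  have hu2 : u ^ 2 = r := Real.sq_sqrt h0.le
  have hv2 : v ^ 2 = 1 - r := Real.sq_sqrt h1r.le
  have hu1 : u < 1 := by nlinarith
  have hprod : 0 < r * (1 - r) := by positivity
  -- sqrt(r(1-r)) = u * v
  have hsplit : Real.sqrt (r * (1 - r)) = u * v := Real.sqrt_mul h0.le _
  -- (1-r)^(3/2) = v^3 , (1-r)^(1/2) = v
  have hrpow_half : (1 - r) ^ ((1:ℝ)/2) = v := (Real.sqrt_eq_rpow (1-r)).symm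
  have hrpow : (1 - r) ^ ((3:ℝ)/2) = v ^ 3 := by
    rw [show ((3:ℝ)/2) = (1/2 : ℝ) * ((3:ℕ):ℝ) by push_cast; ring,
      Real.rpow_mul h1r.le, hrpow_half, Real.rpow_natCast]
  -- T1
  have hinner : HasDerivAt (fun x : ℝ => x * (1 - x)) (1 - 2 * r) r := by
    have := (hasDerivAt_id r).mul ((hasDerivAt_id r).const_sub 1)
    refine this.congr_deriv ?_
    simp only [id_eq]; ring
  have hT1 : HasDerivAt (fun x : ℝ => Real.sqrt (x * (1 - x)))
      (1 / (2 * Real.sqrt (r * (1 - r))) * (1 - 2 * r)) r :=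
    (Real.hasDerivAt_sqrt hprod.ne').comp r hinner
  -- (1-x)^(3/2)
  have hsub : HasDerivAt (fun x : ℝ => 1 - x) (-1 : ℝ) r := by
    simpa using (hasDerivAt_id r).const_sub 1
  have hP : HasDerivAt (fun x : ℝ => (1 - x) ^ ((3:ℝ)/2))
      ((3:ℝ)/2 * (1 - r) ^ ((3:ℝ)/2 - 1) * (-1)) r :=
    (Real.hasDerivAt_rpow_const (p := (3:ℝ)/2) (Or.inr (by norm_num))).comp r hsub
  -- log(1+sqrt x)
  have hsq : HasDerivAt Real.sqrt (1 / (2 * u)) r := Real.hasDerivAt_sqrt h0.ne'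
  have h1u : (0:ℝ) < 1 + u := by linarith
  have hlog1 : HasDerivAt (fun x : ℝ => Real.log (1 + Real.sqrt x))
      ((1 + u)⁻¹ * (1 / (2 * u))) r :=
    by have := (Real.hasDerivAt_log h1u.ne').comp r ((hsq).const_add 1); exact this
  -- log(1-x)
  have hlog2 : HasDerivAt (fun x : ℝ => Real.log (1 - x)) ((1 - r)⁻¹ * (-1)) r :=
    (Real.hasDerivAt_log h1r.ne').comp r hsub
  have hT2 := hP.mul hlog1
  have hT3 := (hP.mul hlog2).const_mul (1/2 : ℝ)
  have hfull := (hT1.add hT2).sub hT3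
  have heq : phi = fun x : ℝ => Real.sqrt (x * (1 - x)) + (1 - x) ^ ((3:ℝ)/2) * Real.log (1 + Real.sqrt x)
      - 1/2 * ((1 - x) ^ ((3:ℝ)/2) * Real.log (1 - x)) := by
    funext x; simp [phi]; ring
  rw [heq]
  refine hfull.congr_deriv ?_
  have hrpow_m1 : (1 - r) ^ ((3:ℝ)/2 - 1) = v := by
    norm_num; exact hrpow_half
  rw [hrpow_m1, hrpow, hsplit]
  have hlogsplit : Real.log (1 - r) = Real.log (1 - u) + Real.log (1 + u) := by
    rw [show (1:ℝ) - r = (1 - u) * (1 + u) by nlinarith, Real.log_mul (by nlinarith) (by nlinarith)]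
  rw [hlogsplit]
  simp only [psi]
  have h1u' : (1:ℝ) - u ^ 2 = v ^ 2 := by nlinarith
  rw [← hu, show r = u^2 from hu2.symm, h1u']
  field_simp
  ring_nf
  linear_combination (8 * (-1 - u - v^2)) * h1u'

lemma psi_anti : StrictAntiOn psi (Set.Ioo (0:ℝ) 1) := by
  apply strictAntiOn_of_deriv_neg (convex_Ioo 0 1)
  · exact fun x hx => (hasDerivAt_psi hx).continuousAt.continuousWithinAt
  · intro x hx
    rw [interior_Ioo] at hx
    rw [(hasDerivAt_psi hx).deriv]
    obtain ⟨h0, h1⟩ := hx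
    have h2 : (0:ℝ) < 1 - x ^ 2 := by nlinarith
    have : 0 < x ^ 2 * (1 - x ^ 2) ^ 2 := by positivity
    simp only [neg_neg, neg_lt_zero]
    exact div_pos one_pos this

lemma psi_half_pos : 0 < psi (1/2) := by
  have h3 : Real.log 3 ≤ 2 := by
    have := Real.log_le_sub_one_of_pos (by norm_num : (0:ℝ) < 3)
    linarith
  have e1 : Real.log (1 - (1:ℝ)/2) = -Real.log 2 := by
    norm_num [Real.log_div, Real.log_inv]
  have e2 : Real.log (1 + (1:ℝ)/2) = Real.log 3 - Real.log 2 := by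
    rw [show (1:ℝ) + 1/2 = 3/2 by norm_num, Real.log_div (by norm_num) (by norm_num)]
  simp only [psi, e1, e2]
  norm_num
  linarith

lemma psi_910_neg : psi (9/10) < 0 := by
  have e1 : Real.log (1 - (9:ℝ)/10) < 0 := Real.log_neg (by norm_num) (by norm_num)
  have e2 : 0 < Real.log (1 + (9:ℝ)/10) := Real.log_pos (by norm_num)
  have : ((2:ℝ) - 3 * (9/10) ^ 2) / (2 * (9/10) * (1 - (9/10) ^ 2)) < 0 := by norm_num
  simp only [psi]
  nlinarith

theorem stmt_8 : ∃! r₀ : ℝ, r₀ ∈ Set.Ioo (0 : ℝ) 1 ∧ deriv phi r₀ = 0 := by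
  have hsub : Set.Icc ((1:ℝ)/2) (9/10) ⊆ Set.Ioo (0:ℝ) 1 := by
    intro x hx; exact ⟨by linarith [hx.1], by linarith [hx.2]⟩
  have hcont : ContinuousOn psi (Set.Icc ((1:ℝ)/2) (9/10)) :=
    fun x hx => (hasDerivAt_psi (hsub hx)).continuousAt.continuousWithinAt
  have hmem : (0:ℝ) ∈ Set.Icc (psi (9/10)) (psi (1/2)) :=
    ⟨psi_910_neg.le, psi_half_pos.le⟩
  obtain ⟨s₀, hs₀mem, hs₀⟩ := intermediate_value_Icc' (by norm_num : (1:ℝ)/2 ≤ 9/10) hcont hmem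
  have hs₀Ioo : s₀ ∈ Set.Ioo (0:ℝ) 1 := hsub hs₀mem
  have hr₀Ioo : s₀ ^ 2 ∈ Set.Ioo (0:ℝ) 1 := by
    constructor
    · exact pow_pos hs₀Ioo.1 2
    · nlinarith [hs₀Ioo.1, hs₀Ioo.2]
  have hsq : Real.sqrt (s₀ ^ 2) = s₀ := Real.sqrt_sq hs₀Ioo.1.le
  refine ⟨s₀ ^ 2, ⟨hr₀Ioo, ?_⟩, ?_⟩
  · rw [(hasDerivAt_phi hr₀Ioo).deriv, hsq, hs₀, mul_zero]
  · rintro r ⟨hr, hd⟩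
    rw [(hasDerivAt_phi hr).deriv] at hd
    have hv : 0 < Real.sqrt (1 - r) := Real.sqrt_pos.2 (by linarith [hr.2])
    have hpsi : psi (Real.sqrt r) = 0 := by
      rcases mul_eq_zero.1 hd with h | h
      · exact absurd h hv.ne'
      · exact h
    have hsr : Real.sqrt r ∈ Set.Ioo (0:ℝ) 1 := by
      constructor
      · exact Real.sqrt_pos.2 hr.1
      · rw [show (1:ℝ) = Real.sqrt 1 by simp]
        exact Real.sqrt_lt_sqrt hr.1.le hr.2
    have := psi_anti.injOn hsr hs₀Ioo (by rw [hpsi, hs₀])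
    rw [← Real.sq_sqrt hr.1.le, this]
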